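/- Let N = 2M with M ≥ 4, and let σ : ℤ/Nℤ → {−1, +1} be a configuration with exactly M sites of value +1 and M sites of value −1. Let p(σ) = #{i : σ(i) ≠ σ(i+1)} denote its number of interfaces, and call a site i isolated if σ(i−1) ≠ σ(i) and σ(i) ≠ σ(i+1). Then: (1) p(σ) is even; (2) if p(σ) = 2, then the set {i : σ(i) = +1} consists of M cyclically consecutive sites (a single cluster of M particles, and a single cluster of M holes); (3) if p(σ) > M, then σ has at least one isolated site; (4) for every even p with 4 ≤ p ≤ M, there exists such a configuration with exactly p interfaces possessing an isolated site, and there also exists one with exactly p interfaces possessing no isolated site. -/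

import Mathlib

open Finset

private lemma ncard_filter {N : ℕ} [NeZero N] (P : ZMod N → Prop) [DecidablePred P] :
    {i : ZMod N | P i}.ncard = (Finset.univ.filter P).card := by
  rw [Set.ncard_eq_toFinset_card']
  simp [Set.toFinset_setOf]

private lemma card_val {N : ℕ} [NeZero N] (Q : ℕ → Prop) [DecidablePred Q] :
    (Finset.univ.filter (fun i : ZMod N => Q i.val)).card
      = ((Finset.range N).filter Q).card := by
  apply Finset.card_bij (fun i _ => i.val)
  · intro i hi; simp only [mem_filter, mem_range] at hi ⊢
    exact ⟨i.val_lt, hi.2⟩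
  · intro a _ b _ h; exact ZMod.val_injective N h
  · intro w hw; simp only [mem_filter, mem_range] at hw
    exact ⟨(w : ZMod N), by simp [mem_filter, ZMod.val_cast_of_lt hw.1, hw.2],
      (ZMod.val_cast_of_lt hw.1)⟩

private lemma ncard_val {N : ℕ} [NeZero N] (Q : ℕ → Prop) [DecidablePred Q] :
    {i : ZMod N | Q i.val}.ncard = ((Finset.range N).filter Q).card := by
  rw [ncard_filter]; exact card_val Q

private lemma val_add_one {N : ℕ} [NeZero N] (i : ZMod N) :
    (i + 1).val = (i.val + 1) % N := by
  conv_lhs => rw [← ZMod.natCast_zmod_val i]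
  rw [show ((i.val : ZMod N) + 1) = ((i.val + 1 : ℕ) : ZMod N) by push_cast; ring]
  exact ZMod.val_natCast _ _

private lemma cast_Nsub1 {N : ℕ} [NeZero N] : ((N - 1 : ℕ) : ZMod N) = -1 := by
  have hN : 0 < N := NeZero.pos N
  have h : ((N - 1 : ℕ) : ZMod N) + 1 = 0 := by
    rw [show (1 : ZMod N) = ((1 : ℕ) : ZMod N) by push_cast; rfl, ← Nat.cast_add,
      show N - 1 + 1 = N by omega, ZMod.natCast_self]
  exact eq_neg_of_add_eq_zero_left h

private lemma val_sub_one {N : ℕ} [NeZero N] (i : ZMod N) :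
    (i - 1).val = if i.val = 0 then N - 1 else i.val - 1 := by
  have hN : 0 < N := NeZero.pos N
  have hv : i.val < N := i.val_lt
  have h1 : i - 1 = i + ((N - 1 : ℕ) : ZMod N) := by rw [cast_Nsub1]; ring
  rw [h1, ZMod.val_add, ZMod.val_natCast]
  by_cases h : i.val = 0
  · rw [if_pos h, h, Nat.mod_eq_of_lt (show N - 1 < N by omega), zero_add,
      Nat.mod_eq_of_lt (show N - 1 < N by omega)]
  · rw [if_neg h, Nat.mod_eq_of_lt (show N - 1 < N by omega),
      show i.val + (N - 1) = (i.val - 1) + N by omega, Nat.add_mod_right,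
      Nat.mod_eq_of_lt (by omega)]

private lemma part1 {N : ℕ} [NeZero N] (σ : ZMod N → ℤ) (hσ : ∀ i, σ i = 1 ∨ σ i = -1) :
    Even {i : ZMod N | σ i ≠ σ (i + 1)}.ncard := by
  classical
  rw [ncard_filter]
  have key : ∀ i : ZMod N, (if σ i ≠ σ (i + 1) then (1 : ZMod 2) else 0)
      = (if σ i = 1 then 0 else 1) + (if σ (i + 1) = 1 then 0 else 1) := by
    intro i
    rcases hσ i with h | h <;> rcases hσ (i + 1) with h' | h' <;>
      rw [h, h'] <;> norm_num <;> decide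
  have hsum : (((Finset.univ.filter (fun i : ZMod N => σ i ≠ σ (i + 1))).card : ZMod 2)) = 0 := by
    rw [← Finset.sum_boole]
    rw [Finset.sum_congr rfl fun i _ => key i, Finset.sum_add_distrib]
    rw [show (∑ i : ZMod N, (if σ (i + 1) = 1 then (0 : ZMod 2) else 1))
        = ∑ i : ZMod N, (if σ i = 1 then (0 : ZMod 2) else 1) from
      (Fintype.sum_equiv (Equiv.addRight (1 : ZMod N))
        (fun i => if σ (i + 1) = 1 then (0 : ZMod 2) else 1)
        (fun i => if σ i = 1 then (0 : ZMod 2) else 1) (fun x => rfl))]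
    have h2 : ∀ x : ZMod 2, x + x = 0 := by decide
    exact h2 _
  exact even_iff_two_dvd.mpr ((ZMod.natCast_eq_zero_iff _ 2).mp hsum)

private lemma part3 {N M : ℕ} [NeZero N] (hNM : N = 2 * M)
    (σ : ZMod N → ℤ)
    (hlt : M < {i : ZMod N | σ i ≠ σ (i + 1)}.ncard) :
    ∃ i : ZMod N, σ (i - 1) ≠ σ i ∧ σ i ≠ σ (i + 1) := by
  classical
  by_contra hno
  push_neg at hno
  rw [ncard_filter] at hlt
  set I := Finset.univ.filter (fun i : ZMod N => σ i ≠ σ (i + 1)) with hI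
  have hcardN : I.card ≤ N := by
    have := Finset.card_le_univ I
    rwa [ZMod.card] at this
    
  have hN : 1 < N := by omega
  have hone1 : ∀ i : ZMod N, i ≠ i + 1 := by
    intro i h
    have h0 : (1 : ZMod N) = 0 := by
      have := (left_eq_add).mp h
      exact this
    have := congrArg ZMod.val h0
    rw [ZMod.val_one_eq_one_mod, ZMod.val_zero, Nat.mod_eq_of_lt hN] at this
    omega
  have hstep : ∀ i ∈ I, i + 1 ∉ I := by
    intro i hi hi1
    simp only [hI, mem_filter] at hi hi1
    have := hno (i + 1)
    rw [add_sub_cancel_right] at this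
    exact hi1.2 (this hi.2)
  have hcard2 : ∀ i : ZMod N, ({i, i + 1} : Finset (ZMod N)).card = 2 := by
    intro i
    rw [Finset.card_insert_of_notMem (by simp [hone1 i]), Finset.card_singleton]
  have hbu : (I.biUnion fun i => ({i, i + 1} : Finset (ZMod N))).card = 2 * I.card := by
    rw [Finset.card_biUnion]
    · rw [Finset.sum_congr rfl fun i _ => hcard2 i, Finset.sum_const, smul_eq_mul, mul_comm]
    · intro a ha b hb hab
      rw [Function.onFun, Finset.disjoint_left]
      intro x hx hx'
      simp only [Finset.mem_insert, Finset.mem_singleton] at hx hx'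
      rcases hx with rfl | rfl <;> rcases hx' with h | h
      · exact hab h
      · exact (hstep b hb) (h ▸ ha)
      · exact (hstep a ha) (h ▸ hb)
      · exact hab (add_right_cancel h)
  have hle := Finset.card_le_univ (I.biUnion fun i => ({i, i + 1} : Finset (ZMod N)))
  rw [hbu, ZMod.card] at hle
  omega
private lemma prop_minus {N : ℕ} [NeZero N] (σ : ZMod N → ℤ)
    (h : ∀ i : ZMod N, σ i = -1 → σ (i + 1) = -1) {y : ZMod N} (hy : σ y = -1) :
    ∀ z : ZMod N, σ z = -1 := by
  have key : ∀ t : ℕ, σ (y + (t : ZMod N)) = -1 := by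
    intro t
    induction t with
    | zero => simpa using hy
    | succ n ih =>
      have hc : (((n + 1 : ℕ)) : ZMod N) = (n : ZMod N) + 1 := by push_cast; ring
      rw [hc, ← add_assoc]
      exact h _ ih
  intro z
  have hz : z = y + (((z - y).val : ℕ) : ZMod N) := by rw [ZMod.natCast_zmod_val]; ring
  rw [hz]; exact key _

private lemma part2 {N M : ℕ} [NeZero N] (hNM : N = 2 * M) (hM : 4 ≤ M)
    (σ : ZMod N → ℤ) (hσ : ∀ i, σ i = 1 ∨ σ i = -1)
    (hcard : {i : ZMod N | σ i = 1}.ncard = M)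
    (hp2 : {i : ZMod N | σ i ≠ σ (i + 1)}.ncard = 2) :
    ∃ j : ZMod N, ∀ i : ZMod N, σ i = 1 ↔ ∃ t : ℕ, t < M ∧ i = j + (t : ZMod N) := by
  classical
  rw [ncard_filter] at hcard hp2
  set ones := Finset.univ.filter (fun i : ZMod N => σ i = 1) with hones
  set I := Finset.univ.filter (fun i : ZMod N => σ i ≠ σ (i + 1)) with hIdef
  have hNpos : 0 < N := NeZero.pos N
  obtain ⟨x, hx⟩ : ∃ x : ZMod N, σ x = 1 := by
    have hne : ones.Nonempty := Finset.card_pos.mp (by rw [hcard]; omega)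
    obtain ⟨x, hx⟩ := hne
    exact ⟨x, (Finset.mem_filter.mp hx).2⟩
  obtain ⟨a, ha1, ha2⟩ : ∃ a : ZMod N, σ a = -1 ∧ σ (a + 1) = 1 := by
    by_contra hcon
    push_neg at hcon
    have hstep : ∀ i : ZMod N, σ i = -1 → σ (i + 1) = -1 := by
      intro i hi
      rcases hσ (i + 1) with h | h
      · exact absurd h (hcon i hi)
      · exact h
    obtain ⟨y, hy⟩ : ∃ y : ZMod N, σ y = -1 := by
      by_contra hy
      push_neg at hy
      have hall : ∀ i : ZMod N, σ i = 1 := fun i => (hσ i).resolve_right (hy i)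
      have huniv : ones = Finset.univ :=
        Finset.eq_univ_iff_forall.mpr fun i => Finset.mem_filter.mpr ⟨Finset.mem_univ _, hall i⟩
      rw [huniv, Finset.card_univ, ZMod.card] at hcard
      omega
    have := prop_minus σ hstep hy x
    rw [hx] at this
    norm_num at this
  have haI : a ∈ I := by
    refine Finset.mem_filter.mpr ⟨Finset.mem_univ _, ?_⟩
    rw [ha1, ha2]; norm_num
  obtain ⟨b, hbb⟩ : ∃ b, I.erase a = {b} :=
    Finset.card_eq_one.mp (by rw [Finset.card_erase_of_mem haI, hp2])
  have hba : b ≠ a := by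
    have : b ∈ I.erase a := by rw [hbb]; exact Finset.mem_singleton_self b
    exact Finset.ne_of_mem_erase this
  have hbI : b ∈ I := Finset.mem_of_mem_erase (by rw [hbb]; exact Finset.mem_singleton_self b)
  have hmem : ∀ i : ZMod N, i ∈ I ↔ i = a ∨ i = b := by
    intro i
    constructor
    · intro hi
      by_cases h : i = a
      · exact Or.inl h
      · right
        have h2 : i ∈ I.erase a := Finset.mem_erase.mpr ⟨h, hi⟩
        rw [hbb] at h2
        exact Finset.mem_singleton.mp h2
    · rintro (rfl | rfl)
      exacts [haI, hbI]
  have hnotI : ∀ i : ZMod N, i ≠ a → i ≠ b → σ i = σ (i + 1) := by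
    intro i h1 h2
    by_contra h
    rcases (hmem i).mp (Finset.mem_filter.mpr ⟨Finset.mem_univ _, h⟩) with h' | h'
    exacts [h1 h', h2 h']
  set j := a + 1 with hj
  set v := (b - j).val with hv
  set w := (a - (b + 1)).val with hw
  have hvN : v < N := ZMod.val_lt _
  have hwN : w < N := ZMod.val_lt _
  have hjv : j + (v : ZMod N) = b := by rw [hv, ZMod.natCast_zmod_val]; ring
  have hbw : b + 1 + (w : ZMod N) = a := by rw [hw, ZMod.natCast_zmod_val]; ring
  have C1 : ∀ t : ℕ, t ≤ v → σ (j + (t : ZMod N)) = 1 := by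
    intro t
    induction t with
    | zero => intro _; simpa using ha2
    | succ n ih =>
      intro hn
      have hne_a : j + (n : ZMod N) ≠ a := by
        intro h
        have h0 : ((n + 1 : ℕ) : ZMod N) = 0 := by
          push_cast
          linear_combination h - hj
        have hdvd := (ZMod.natCast_eq_zero_iff _ N).mp h0
        have := Nat.le_of_dvd (by omega) hdvd
        omega
      have hne_b : j + (n : ZMod N) ≠ b := by
        intro h
        rw [← hjv] at h
        have h2 : (n : ZMod N) = (v : ZMod N) := add_left_cancel h
        have h3 := congrArg ZMod.val h2
        rw [ZMod.val_natCast, ZMod.val_natCast, Nat.mod_eq_of_lt (by omega),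
          Nat.mod_eq_of_lt hvN] at h3
        omega
      have heq := hnotI _ hne_a hne_b
      have hc : ((n + 1 : ℕ) : ZMod N) = (n : ZMod N) + 1 := by push_cast; ring
      rw [hc, ← add_assoc, ← heq]
      exact ih (by omega)
  have hb1 : σ b = 1 := by rw [← hjv]; exact C1 v le_rfl
  have hb2 : σ (b + 1) = -1 := by
    have hbne := (Finset.mem_filter.mp hbI).2
    rcases hσ (b + 1) with h | h
    · rw [hb1, h] at hbne; exact absurd rfl hbne
    · exact h
  have C2 : ∀ t : ℕ, t ≤ w → σ (b + 1 + (t : ZMod N)) = -1 := by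
    intro t
    induction t with
    | zero => intro _; simpa using hb2
    | succ n ih =>
      intro hn
      have hne_b : b + 1 + (n : ZMod N) ≠ b := by
        intro h
        have h0 : ((n + 1 : ℕ) : ZMod N) = 0 := by
          push_cast
          linear_combination h
        have := Nat.le_of_dvd (by omega) ((ZMod.natCast_eq_zero_iff _ N).mp h0)
        omega
      have hne_a : b + 1 + (n : ZMod N) ≠ a := by
        intro h
        rw [← hbw] at h
        have h2 : (n : ZMod N) = (w : ZMod N) := add_left_cancel h
        have h3 := congrArg ZMod.val h2
        rw [ZMod.val_natCast, ZMod.val_natCast, Nat.mod_eq_of_lt (by omega),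
          Nat.mod_eq_of_lt hwN] at h3
        omega
      have heq := hnotI _ hne_a hne_b
      have hc : ((n + 1 : ℕ) : ZMod N) = (n : ZMod N) + 1 := by push_cast; ring
      rw [hc, ← add_assoc, ← heq]
      exact ih (by omega)
  have hvw : v + w + 2 = N := by
    have h0 : ((v + w + 2 : ℕ) : ZMod N) = 0 := by
      push_cast
      rw [hv, hw, ZMod.natCast_zmod_val, ZMod.natCast_zmod_val, hj]
      ring
    obtain ⟨k, hk⟩ := (ZMod.natCast_eq_zero_iff _ N).mp h0
    have hk0 : k ≠ 0 := by rintro rfl; rw [mul_zero] at hk; omega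
    rcases Nat.lt_or_ge k 2 with h | h
    · have hk1 : k = 1 := by omega
      rw [hk1, mul_one] at hk
      exact hk
    · exfalso
      have h2N : N * 2 ≤ N * k := Nat.mul_le_mul le_rfl h
      rw [← hk] at h2N
      have hvw1 : v = N - 1 ∧ w = N - 1 := by omega
      apply hba
      rw [← hjv, hvw1.1, cast_Nsub1, hj]
      ring
  set A := (Finset.range (v + 1)).image (fun t : ℕ => j + (t : ZMod N)) with hA
  set B := (Finset.range (w + 1)).image (fun t : ℕ => b + 1 + (t : ZMod N)) with hB
  have cardA : A.card = v + 1 := by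
    rw [hA, Finset.card_image_of_injOn, Finset.card_range]
    intro s hs t ht hst
    simp only [Finset.coe_range, Set.mem_Iio] at hs ht
    have h2 : (s : ZMod N) = (t : ZMod N) := add_left_cancel hst
    have h3 := congrArg ZMod.val h2
    rwa [ZMod.val_natCast, ZMod.val_natCast, Nat.mod_eq_of_lt (by omega),
      Nat.mod_eq_of_lt (by omega)] at h3
  have cardB : B.card = w + 1 := by
    rw [hB, Finset.card_image_of_injOn, Finset.card_range]
    intro s hs t ht hst
    simp only [Finset.coe_range, Set.mem_Iio] at hs ht
    have h2 : (s : ZMod N) = (t : ZMod N) := add_left_cancel hst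
    have h3 := congrArg ZMod.val h2
    rwa [ZMod.val_natCast, ZMod.val_natCast, Nat.mod_eq_of_lt (by omega),
      Nat.mod_eq_of_lt (by omega)] at h3
  have hAones : ∀ x ∈ A, σ x = 1 := by
    intro z hz
    obtain ⟨t, ht, rfl⟩ := Finset.mem_image.mp hz
    simp only [Finset.mem_range] at ht
    exact C1 t (by omega)
  have hBminus : ∀ x ∈ B, σ x = -1 := by
    intro z hz
    obtain ⟨t, ht, rfl⟩ := Finset.mem_image.mp hz
    simp only [Finset.mem_range] at ht
    exact C2 t (by omega)
  have hdisjAB : Disjoint A B := by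
    rw [Finset.disjoint_left]
    intro z hzA hzB
    have h1 := hAones z hzA
    have h2 := hBminus z hzB
    rw [h1] at h2
    norm_num at h2
  have hunion : A ∪ B = Finset.univ := by
    apply Finset.eq_univ_of_card
    rw [Finset.card_union_of_disjoint hdisjAB, cardA, cardB, ZMod.card]
    omega
  have honesA : ones = A := by
    apply Finset.Subset.antisymm
    · intro z hz
      have hz1 : σ z = 1 := (Finset.mem_filter.mp hz).2
      have hzu : z ∈ A ∪ B := hunion ▸ Finset.mem_univ z
      rcases Finset.mem_union.mp hzu with h | h
      · exact h
      · have := hBminus z h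
        rw [hz1] at this
        norm_num at this
    · intro z hz
      exact Finset.mem_filter.mpr ⟨Finset.mem_univ _, hAones z hz⟩
  have hvM : v + 1 = M := by rw [honesA, cardA] at hcard; exact hcard
  refine ⟨j, fun i => ?_⟩
  constructor
  · intro hi
    have hiA : i ∈ A := by
      rw [← honesA]
      exact Finset.mem_filter.mpr ⟨Finset.mem_univ _, hi⟩
    obtain ⟨t, ht, rfl⟩ := Finset.mem_image.mp hiA
    simp only [Finset.mem_range] at ht
    exact ⟨t, by omega, rfl⟩
  · rintro ⟨t, htM, rfl⟩
    exact C1 t (by omega)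
def QA (M a v : ℕ) : Prop := (v < 2*a ∧ v % 2 = 0) ∨ (2*a ≤ v ∧ v < M + a)
def QB (M a v : ℕ) : Prop := (v < 4*a ∧ v % 4 < 2) ∨ (4*a ≤ v ∧ v < M + 2*a)

instance (M a v : ℕ) : Decidable (QA M a v) := by unfold QA; exact inferInstance
instance (M a v : ℕ) : Decidable (QB M a v) := by unfold QB; exact inferInstance

private lemma build {N : ℕ} [NeZero N] (Q : ℕ → Prop) [DecidablePred Q] :
    ∃ σ' : ZMod N → ℤ,
      (∀ i, σ' i = 1 ∨ σ' i = -1) ∧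
      (∀ i j : ZMod N, σ' i ≠ σ' j ↔ ¬(Q i.val ↔ Q j.val)) ∧
      {i : ZMod N | σ' i = 1}.ncard = ((Finset.range N).filter Q).card ∧
      {i : ZMod N | σ' i ≠ σ' (i + 1)}.ncard
        = ((Finset.range N).filter (fun v => ¬(Q v ↔ Q ((v + 1) % N)))).card := by
  have hne : ∀ i j : ZMod N,
      ((if Q i.val then (1 : ℤ) else -1) ≠ (if Q j.val then (1 : ℤ) else -1))
        ↔ ¬(Q i.val ↔ Q j.val) := by
    intro i j
    by_cases h1 : Q i.val <;> by_cases h2 : Q j.val <;> norm_num [h1, h2]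
  refine ⟨fun i => if Q i.val then 1 else -1, fun i => ?_, hne, ?_, ?_⟩
  · dsimp only; split <;> norm_num
  · have hset : {i : ZMod N | (if Q i.val then (1 : ℤ) else -1) = 1} = {i : ZMod N | Q i.val} := by
      ext i
      by_cases h : Q i.val <;> simp [h]
    rw [hset, ncard_val]
  · have hset : {i : ZMod N | (if Q i.val then (1 : ℤ) else -1)
        ≠ (if Q (i + 1).val then (1 : ℤ) else -1)}
        = {i : ZMod N | ¬(Q i.val ↔ Q ((i.val + 1) % N))} := by
      ext i
      rw [Set.mem_setOf_eq, Set.mem_setOf_eq, hne, val_add_one]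
    rw [hset]
    exact ncard_val (fun v => ¬(Q v ↔ Q ((v + 1) % N)))

private lemma card_range_even (a : ℕ) :
    ((Finset.range (2*a)).filter (fun v => v % 2 = 0)).card = a := by
  induction a with
  | zero => simp
  | succ n ih =>
    rw [show 2*(n+1) = (2*n+1)+1 by ring, Finset.range_add_one, Finset.filter_insert,
      if_neg (by omega), Finset.range_add_one, Finset.filter_insert, if_pos (by omega),
      Finset.card_insert_of_notMem (by simp), ih]

private lemma card_range_odd (a : ℕ) :
    ((Finset.range (2*a)).filter (fun v => v % 2 = 1)).card = a := by
  induction a with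
  | zero => simp
  | succ n ih =>
    rw [show 2*(n+1) = (2*n+1)+1 by ring, Finset.range_add_one, Finset.filter_insert,
      if_pos (by omega), Finset.range_add_one, Finset.filter_insert, if_neg (by omega),
      Finset.card_insert_of_notMem (by simp), ih]

private lemma card_range_mod4 (a : ℕ) :
    ((Finset.range (4*a)).filter (fun v => v % 4 < 2)).card = 2*a := by
  induction a with
  | zero => simp
  | succ n ih =>
    rw [show 4*(n+1) = (4*n+3)+1 by ring, Finset.range_add_one, Finset.filter_insert,
      if_neg (by omega), show 4*n+3 = (4*n+2)+1 by ring, Finset.range_add_one,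
      Finset.filter_insert, if_neg (by omega), show 4*n+2 = (4*n+1)+1 by ring,
      Finset.range_add_one, Finset.filter_insert, if_pos (by omega),
      Finset.card_insert_of_notMem (by simp), Finset.range_add_one, Finset.filter_insert,
      if_pos (by omega), Finset.card_insert_of_notMem (by simp), ih]
    omega

private lemma countA_ones (M a : ℕ) (ha : 1 ≤ a) (haM : 2*a+2 ≤ M) :
    ((Finset.range (2*M)).filter (QA M a)).card = M := by
  have hset : (Finset.range (2*M)).filter (QA M a)
      = ((Finset.range (2*a)).filter (fun v => v % 2 = 0)) ∪ Finset.Ico (2*a) (M+a) := by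
    ext v
    simp only [Finset.mem_filter, Finset.mem_range, Finset.mem_union, Finset.mem_Ico, QA]
    omega
  rw [hset, Finset.card_union_of_disjoint, card_range_even, Nat.card_Ico]
  · omega
  · rw [Finset.disjoint_left]
    intro z hz hz'
    simp only [Finset.mem_filter, Finset.mem_range, Finset.mem_Ico] at hz hz'
    omega

private lemma countB_ones (M a : ℕ) (ha : 1 ≤ a) (haM : 2*a+2 ≤ M) :
    ((Finset.range (2*M)).filter (QB M a)).card = M := by
  have hset : (Finset.range (2*M)).filter (QB M a)
      = ((Finset.range (4*a)).filter (fun v => v % 4 < 2)) ∪ Finset.Ico (4*a) (M+2*a) := by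
    ext v
    simp only [Finset.mem_filter, Finset.mem_range, Finset.mem_union, Finset.mem_Ico, QB]
    omega
  rw [hset, Finset.card_union_of_disjoint, card_range_mod4, Nat.card_Ico]
  · omega
  · rw [Finset.disjoint_left]
    intro z hz hz'
    simp only [Finset.mem_filter, Finset.mem_range, Finset.mem_Ico] at hz hz'
    omega

private lemma countA_intf (M a : ℕ) (ha : 1 ≤ a) (haM : 2*a+2 ≤ M) :
    ((Finset.range (2*M)).filter (fun v => ¬(QA M a v ↔ QA M a ((v+1) % (2*M))))).card
      = 2*a+2 := by
  have hset : (Finset.range (2*M)).filter (fun v => ¬(QA M a v ↔ QA M a ((v+1) % (2*M))))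
      = insert (2*M-1) (insert (M+a-1) (Finset.range (2*a))) := by
    ext v
    rw [Finset.mem_filter]
    simp only [Finset.mem_filter, Finset.mem_range, Finset.mem_insert, QA]
    constructor
    · rintro ⟨hv, h⟩
      rcases Nat.lt_or_ge (v+1) (2*M) with hv1 | hv1
      · rw [Nat.mod_eq_of_lt hv1] at h
        omega
      · rw [show v + 1 = 2*M by omega, Nat.mod_self] at h
        omega
    · rintro (h | h | h)
      · refine ⟨by omega, ?_⟩
        rw [show v + 1 = 2*M by omega, Nat.mod_self]
        omega
      · refine ⟨by omega, ?_⟩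
        rw [Nat.mod_eq_of_lt (show v + 1 < 2*M by omega)]
        omega
      · refine ⟨by omega, ?_⟩
        rw [Nat.mod_eq_of_lt (show v + 1 < 2*M by omega)]
        omega
  rw [hset,
    Finset.card_insert_of_notMem (by simp only [Finset.mem_insert, Finset.mem_range]; omega),
    Finset.card_insert_of_notMem (by simp only [Finset.mem_range]; omega),
    Finset.card_range]

private lemma countB_intf (M a : ℕ) (ha : 1 ≤ a) (haM : 2*a+2 ≤ M) :
    ((Finset.range (2*M)).filter (fun v => ¬(QB M a v ↔ QB M a ((v+1) % (2*M))))).card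
      = 2*a+2 := by
  have hset : (Finset.range (2*M)).filter (fun v => ¬(QB M a v ↔ QB M a ((v+1) % (2*M))))
      = insert (2*M-1) (insert (M+2*a-1)
          ((Finset.range (4*a)).filter (fun v => v % 2 = 1))) := by
    ext v
    rw [Finset.mem_filter]
    simp only [Finset.mem_filter, Finset.mem_range, Finset.mem_insert, QB]
    constructor
    · rintro ⟨hv, h⟩
      rcases Nat.lt_or_ge (v+1) (2*M) with hv1 | hv1
      · rw [Nat.mod_eq_of_lt hv1] at h
        omega
      · rw [show v + 1 = 2*M by omega, Nat.mod_self] at h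
        omega
    · rintro (h | h | h)
      · refine ⟨by omega, ?_⟩
        rw [show v + 1 = 2*M by omega, Nat.mod_self]
        omega
      · refine ⟨by omega, ?_⟩
        rw [Nat.mod_eq_of_lt (show v + 1 < 2*M by omega)]
        omega
      · refine ⟨by omega, ?_⟩
        rw [Nat.mod_eq_of_lt (show v + 1 < 2*M by omega)]
        omega
  rw [hset,
    Finset.card_insert_of_notMem
      (by simp only [Finset.mem_insert, Finset.mem_filter, Finset.mem_range]; omega),
    Finset.card_insert_of_notMem (by simp only [Finset.mem_filter, Finset.mem_range]; omega),
    show 4*a = 2*(2*a) by ring, card_range_odd]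
/-- Structure of particle/hole configurations on the cyclic lattice of
`N = 2M` sites: the number of interfaces is even; configurations with two interfaces
consist of a single cluster of `M` particles; configurations with more than `M` interfaces
have an isolated site; and for every even `p` with `4 ≤ p ≤ M` there are configurations
with `p` interfaces both with and without isolated sites. -/
theorem stmt_8 (N M : ℕ) (hNM : N = 2 * M) (hM : 4 ≤ M)
    (σ : ZMod N → ℤ) (hσ : ∀ i, σ i = 1 ∨ σ i = -1)
    (hcard : {i : ZMod N | σ i = 1}.ncard = M) :
    Even {i : ZMod N | σ i ≠ σ (i + 1)}.ncard ∧
    ({i : ZMod N | σ i ≠ σ (i + 1)}.ncard = 2 →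
      ∃ j : ZMod N, ∀ i : ZMod N, σ i = 1 ↔ ∃ t : ℕ, t < M ∧ i = j + (t : ZMod N)) ∧
    (M < {i : ZMod N | σ i ≠ σ (i + 1)}.ncard →
      ∃ i : ZMod N, σ (i - 1) ≠ σ i ∧ σ i ≠ σ (i + 1)) ∧
    (∀ p : ℕ, Even p → 4 ≤ p → p ≤ M →
      (∃ σ' : ZMod N → ℤ, (∀ i, σ' i = 1 ∨ σ' i = -1) ∧
        {i : ZMod N | σ' i = 1}.ncard = M ∧
        {i : ZMod N | σ' i ≠ σ' (i + 1)}.ncard = p ∧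
        ∃ i : ZMod N, σ' (i - 1) ≠ σ' i ∧ σ' i ≠ σ' (i + 1)) ∧
      (∃ σ' : ZMod N → ℤ, (∀ i, σ' i = 1 ∨ σ' i = -1) ∧
        {i : ZMod N | σ' i = 1}.ncard = M ∧
        {i : ZMod N | σ' i ≠ σ' (i + 1)}.ncard = p ∧
        ¬∃ i : ZMod N, σ' (i - 1) ≠ σ' i ∧ σ' i ≠ σ' (i + 1))) := by
  subst hNM
  haveI : NeZero (2 * M) := ⟨by omega⟩
  refine ⟨part1 σ hσ, fun hp2 => part2 rfl hM σ hσ hcard hp2, fun hlt => part3 rfl σ hlt, ?_⟩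
  intro p hpE hp4 hpM
  obtain ⟨r, hr⟩ := hpE
  set a := r - 1 with haa
  have ha : 1 ≤ a := by omega
  have haM : 2*a + 2 ≤ M := by omega
  have hpa : p = 2*a + 2 := by omega
  constructor
  · obtain ⟨σ', hpm, hne, hones, hintf⟩ := build (N := 2 * M) (QA M a)
    refine ⟨σ', hpm, ?_, ?_, ?_⟩
    · rw [hones]; exact countA_ones M a ha haM
    · rw [hintf, hpa]; exact countA_intf M a ha haM
    · have hval : ((0 : ZMod (2 * M)) - 1).val = 2 * M - 1 := by
        rw [val_sub_one, ZMod.val_zero, if_pos rfl]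
      refine ⟨0, ?_, ?_⟩
      · rw [hne, hval, ZMod.val_zero]
        unfold QA
        omega
      · have h1 : ((0 : ZMod (2 * M)) + 1).val = 1 := by
          rw [zero_add, ZMod.val_one_eq_one_mod, Nat.mod_eq_of_lt (by omega)]
        rw [hne, h1, ZMod.val_zero]
        unfold QA
        omega
  · obtain ⟨σ', hpm, hne, hones, hintf⟩ := build (N := 2 * M) (QB M a)
    refine ⟨σ', hpm, ?_, ?_, ?_⟩
    · rw [hones]; exact countB_ones M a ha haM
    · rw [hintf, hpa]; exact countB_intf M a ha haM
    · rintro ⟨i, h1, h2⟩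
      rw [hne] at h1 h2
      rw [val_sub_one] at h1
      rw [val_add_one] at h2
      have hv : i.val < 2 * M := i.val_lt
      by_cases h0 : i.val = 0
      · rw [if_pos h0, h0] at h1
        rw [h0] at h2
        rw [Nat.mod_eq_of_lt (show 0 + 1 < 2 * M by omega)] at h2
        unfold QB at h1 h2
        omega
      · rw [if_neg h0] at h1
        by_cases hN1 : i.val + 1 < 2 * M
        · rw [Nat.mod_eq_of_lt hN1] at h2
          unfold QB at h1 h2
          omega
        · rw [show i.val + 1 = 2 * M by omega, Nat.mod_self] at h2
          unfold QB at h1 h2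
          omega
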